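/- Let G be a finite 2-qBMG satisfying property (*), i.e., no two distinct symmetric edges of G have a common endpoint. Then every orientation O of G is a 2-qBMG (with the same color classes). -/
import Mathlib


/-- Two vertices are equivalent (`x ∼̇ y`) if they have the same
out-neighbors and the same in-neighbors. -/
def dotSim {V : Type*} (E : V → V → Prop) (x y : V) : Prop :=
  (∀ z, E x z ↔ E y z) ∧ (∀ z, E z x ↔ E z y)

/-- `U` and `W` are the color classes of a 2-colored digraph with edge relation `E`:
they partition the vertex set and every edge has one endpoint in each class. -/
def IsTwoColored {V : Type*} (E : V → V → Prop) (U W : Set V) : Prop :=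
  (∀ v, v ∈ U ∨ v ∈ W) ∧ (∀ v, ¬(v ∈ U ∧ v ∈ W)) ∧
    ∀ u v, E u v → (u ∈ U ∧ v ∈ W) ∨ (u ∈ W ∧ v ∈ U)

/-- Axiom (N1). -/
def AxN1 {V : Type*} (E : V → V → Prop) : Prop :=
  ∀ u v, u ≠ v → ¬E u v → ¬E v u → ∀ w t, ¬(E u t ∧ E v w ∧ E t w)

/-- Axiom (N2): bi-transitivity. -/
def AxN2 {V : Type*} (E : V → V → Prop) : Prop :=
  ∀ u v w t, E u v → E v w → E w t → E u t

/-- Axiom (N3). -/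
def AxN3 {V : Type*} (E : V → V → Prop) : Prop :=
  ∀ u v w, E u w → E v w → (∀ z, E u z → E v z) ∨ (∀ z, E v z → E u z)

/-- A 2-qBMG: an irreflexive 2-colored digraph satisfying (N1), (N2), (N3). -/
def IsQBMG {V : Type*} (E : V → V → Prop) (U W : Set V) : Prop :=
  (∀ v, ¬E v v) ∧ IsTwoColored E U W ∧ AxN1 E ∧ AxN2 E ∧ AxN3 E

/-- An automorphism of the digraph: a permutation mapping edges to edges. -/
def IsAut {V : Type*} (E : V → V → Prop) (π : Equiv.Perm V) : Prop :=
  ∀ u v, E u v → E (π u) (π v)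

/-- A color-preserving automorphism of the 2-colored digraph. -/
def IsAutI {V : Type*} (E : V → V → Prop) (U W : Set V) (π : Equiv.Perm V) : Prop :=
  IsAut E π ∧ (∀ v ∈ U, π v ∈ U) ∧ (∀ v ∈ W, π v ∈ W)

/-- `F` is an orientation of `E`: `F ⊆ E`, `F` keeps every non-symmetric edge of `E`,
and from each symmetric edge of `E` it keeps exactly one of the two opposite edges. -/
def IsOrientation {V : Type*} (E F : V → V → Prop) : Prop :=
  (∀ u v, F u v → E u v) ∧
  (∀ u v, E u v → ¬E v u → F u v) ∧
  (∀ u v, E u v → E v u → (F u v ↔ ¬F v u))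


private lemma orient_incl {V : Type*} (E F : V → V → Prop)
    (h2 : AxN2 E)
    (hstar : ∀ u v w, E u v → E v u → E u w → E w u → v = w)
    (hFE : ∀ u v, F u v → E u v) (hkeep : ∀ u v, E u v → ¬E v u → F u v)
    (hsym : ∀ u v, E u v → E v u → (F u v ↔ ¬F v u))
    (u v : V) (hle : ∀ z, E u z → E v z) :
    (∀ z, F u z → F v z) ∨ (∀ z, F v z → F u z) := by
  by_cases hc : ∀ z, F u z → F v z
  · exact Or.inl hc
  push_neg at hc
  obtain ⟨z, fuz, hnfvz⟩ := hc
  have euz := hFE _ _ fuz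
  have evz := hle _ euz
  have ezv : E z v := by
    by_contra h; exact hnfvz (hkeep _ _ evz h)
  have hnzu : ¬ E z u := by
    intro ezu
    have huv : u = v := hstar z u v ezu euz ezv evz
    exact hnfvz (huv ▸ fuz)
  refine Or.inr fun y fvy => ?_
  have evy := hFE _ _ fvy
  have euy : E u y := h2 u z v y euz ezv evy
  by_cases eyu : E y u
  · have eyv : E y v := h2 y u z v eyu euz ezv
    have hyz : y = z := hstar v y z evy eyv evz ezv
    exact absurd (hyz ▸ eyu) hnzu
  · exact hkeep _ _ euy eyu

/-- Let `G` be a finite 2-qBMG satisfying property (*): no two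
distinct symmetric edges of `G` have a common endpoint.  Then every orientation of `G`
is a 2-qBMG with the same color classes. -/
theorem stmt_16 {V : Type*} [Fintype V] [DecidableEq V] (E F : V → V → Prop)
    (U W : Set V) (hG : IsQBMG E U W)
    (hstar : ∀ u v w, E u v → E v u → E u w → E w u → v = w)
    (hF : IsOrientation E F) :
    IsQBMG F U W := by
  obtain ⟨hirr, ⟨hcov, hdisj, hcol⟩, h1, h2, h3⟩ := hG
  obtain ⟨hFE, hkeep, hsym⟩ := hF
  refine ⟨fun v hv => hirr v (hFE _ _ hv),
    ⟨hcov, hdisj, fun u v h => hcol u v (hFE _ _ h)⟩, ?_, ?_, ?_⟩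
  · -- N1
    rintro u v huv hFuv hFvu w t ⟨hut, hvw, htw⟩
    have heut := hFE _ _ hut
    have hevw := hFE _ _ hvw
    have hetw := hFE _ _ htw
    by_cases h1uv : E u v
    · by_cases h2vu : E v u
      · exact hFvu (by by_contra h; exact hFuv ((hsym u v h1uv h2vu).mpr h))
      · exact hFuv (hkeep u v h1uv h2vu)
    · by_cases h2vu : E v u
      · exact hFvu (hkeep v u h2vu h1uv)
      · exact h1 u v huv h1uv h2vu w t ⟨heut, hevw, hetw⟩
  · -- N2
    intro u v w t fuv fvw fwt
    have euv := hFE _ _ fuv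
    have evw := hFE _ _ fvw
    have ewt := hFE _ _ fwt
    have eut := h2 u v w t euv evw ewt
    by_cases etu : E t u
    · by_contra hfut
      have ftu : F t u := by
        by_contra h; exact hfut ((hsym u t eut etu).mpr h)
      have etw := h2 t u v w etu euv evw
      have huw : u = w := hstar t u w etu eut etw ewt
      subst huw
      exact (hsym u v euv evw).mp fuv fvw
    · exact hkeep u t eut etu
  · -- N3
    intro u v w fuw fvw
    have euw := hFE _ _ fuw
    have evw := hFE _ _ fvw
    rcases h3 u v w euw evw with hle | hle
    · exact orient_incl E F h2 hstar hFE hkeep hsym u v hle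
    · exact (orient_incl E F h2 hstar hFE hkeep hsym v u hle).symm
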